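/- If n is a positive integer congruent to 2 modulo 4, then the sum of the first n Fibonacci numbers, F_0 + F_1 + ... + F_{n-1}, equals L_{n/2} · F_{n/2 + 1}. -/
import Mathlib

theorem cassini_odd : ∀ m : ℕ, Nat.fib (2*m+1)^2 = Nat.fib (2*m) * Nat.fib (2*m+2) + 1 := by
  intro m
  induction m with
  | zero => simp
  | succ k ih =>
    have h1 : Nat.fib (2*k+2) = Nat.fib (2*k) + Nat.fib (2*k+1) := Nat.fib_add_two
    have h2 : Nat.fib (2*k+3) = Nat.fib (2*k+1) + Nat.fib (2*k+2) := Nat.fib_add_two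
    have h3 : Nat.fib (2*k+4) = Nat.fib (2*k+2) + Nat.fib (2*k+3) := Nat.fib_add_two
    show Nat.fib (2*k+3)^2 = Nat.fib (2*k+2) * Nat.fib (2*k+4) + 1
    nlinarith [ih, h1, h2, h3]

theorem sum_fib_eq_lucas_mul_fib (L : ℕ → ℕ) (hL0 : L 0 = 2) (hL1 : L 1 = 1)
    (hL : ∀ n, L (n + 2) = L (n + 1) + L n) (n : ℕ) (hn : 0 < n) (hn4 : n % 4 = 2) :
    (∑ k ∈ Finset.range n, Nat.fib k) = L (n / 2) * Nat.fib (n / 2 + 1) := by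
  have lucas_fib : ∀ m, L (m+1) = Nat.fib (m+2) + Nat.fib m := by
    intro m
    induction m using Nat.twoStepInduction with
    | zero => simp [hL1]
    | one => rw [hL 0, hL0, hL1]; simp [Nat.fib_add_two]
    | more k ih1 ih2 =>
      rw [hL (k+1), ih1, ih2]
      have h1 : Nat.fib (k+4) = Nat.fib (k+2) + Nat.fib (k+3) := Nat.fib_add_two
      have h2 : Nat.fib (k+2) = Nat.fib k + Nat.fib (k+1) := Nat.fib_add_two
      show Nat.fib (k+3) + Nat.fib (k+1) + (Nat.fib (k+2) + Nat.fib k) = Nat.fib (k+4) + Nat.fib (k+2)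
      omega
  obtain ⟨m, rfl⟩ : ∃ m, n = 4*m+2 := ⟨n/4, by omega⟩
  have hdiv : (4*m+2)/2 = 2*m+1 := by omega
  rw [hdiv]
  have hsum : Nat.fib (4*m+3) = (∑ k ∈ Finset.range (4*m+2), Nat.fib k) + 1 := by
    have := Nat.fib_succ_eq_succ_sum (4*m+2)
    have e4 : 4*m+2+1 = 4*m+3 := by ring
    rw [e4] at this
    exact this
  rw [lucas_fib (2*m)]
  have hf : Nat.fib (4*m+3) = Nat.fib (2*m+2)^2 + Nat.fib (2*m+1)^2 := by
    have h := Nat.fib_two_mul_add_one (2*m+1)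
    have e : 2*(2*m+1)+1 = 4*m+3 := by ring
    rw [e] at h
    linarith
  have hc := cassini_odd m
  have e : 2*m+1+1 = 2*m+2 := by ring
  rw [e]
  have key : Nat.fib (4*m+3) = (Nat.fib (2*m+2) + Nat.fib (2*m)) * Nat.fib (2*m+2) + 1 := by
    nlinarith [hf, hc]
  omega
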